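/- Let f : N → M be a surjective non-contractive multi-embedding of a finite metric space M in a metric space N with path distortion at most α, and let g_1,…,g_k ⊆ M be groups. For every Steiner subgraph E in M for g_1,…,g_k whose graph is a tree (connected and acyclic on its support), there exists a Steiner subgraph E' in N for the groups f⁻¹(g_1),…,f⁻¹(g_k) with cost(E') ≤ 2α·cost(E). -/

import Mathlib

/-- A multi-embedding `f : N → M` (a surjective map) is non-contractive if
distances in `N` dominate the distances of the images in `M`. -/
def NonContractive {N M : Type*} [MetricSpace N] [MetricSpace M] (f : N → M) : Prop :=
  ∀ u v : N, dist (f u) (f v) ≤ dist u v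

/-- The length of a path (finite sequence of points) in a metric space. -/
noncomputable def pathLength {X : Type*} [MetricSpace X] (p : List X) : ℝ :=
  (List.zipWith dist p p.tail).sum

/-- A non-contractive multi-embedding `f : N → M` has path distortion at most `α`. -/
def PathDistortionLE {N M : Type*} [MetricSpace N] [MetricSpace M] (f : N → M) (α : ℝ) : Prop :=
  ∀ p : List M, ∃ p' : List N, p'.map f = p ∧ pathLength p' ≤ α * pathLength p

def edgeGraph {S : Type*} (E : Finset (Sym2 S)) : SimpleGraph S where
  Adj x y := x ≠ y ∧ s(x, y) ∈ E
  symm := ⟨fun x y h => ⟨h.1.symm, by rw [Sym2.eq_swap]; exact h.2⟩⟩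
  loopless := ⟨fun x h => h.1 rfl⟩

/-- The support of a finite set of edges: the set of endpoints of its (non-degenerate)
edges. -/
def edgeSupport {S : Type*} (E : Finset (Sym2 S)) : Set S :=
  {x | ∃ y, x ≠ y ∧ s(x, y) ∈ E}

/-- The cost of a finite set of edges in a metric space: the sum of the distances
between the endpoints of the edges. -/
noncomputable def edgeCost {S : Type*} [MetricSpace S] (E : Finset (Sym2 S)) : ℝ :=
  ∑ e ∈ E, Sym2.lift ⟨dist, fun a b => dist_comm a b⟩ e

/-- A finite edge set `E` is a Steiner subgraph for the groups `g_1,…,g_k`: its edges are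
pairs of distinct points, the simple graph on its support with edge set `E` is connected,
and its support meets every group. -/
def IsSteinerSubgraph {S : Type*} {k : ℕ} (E : Finset (Sym2 S)) (g : Fin k → Set S) : Prop :=
  (∀ e ∈ E, ¬ e.IsDiag) ∧
  (∀ x ∈ edgeSupport E, ∀ y ∈ edgeSupport E, (edgeGraph E).Reachable x y) ∧
  (∀ j, ∃ x ∈ edgeSupport E, x ∈ g j)

/-! ### auxiliary lemmas -/

section PathLen

variable {X : Type*} [MetricSpace X]

lemma pathLength_nil : pathLength ([] : List X) = 0 := rfl

lemma pathLength_single (a : X) : pathLength [a] = 0 := by simp [pathLength]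

lemma pathLength_cons_cons (a b : X) (l : List X) :
    pathLength (a :: b :: l) = dist a b + pathLength (b :: l) := by
  simp [pathLength]

lemma pathLength_nonneg (l : List X) : 0 ≤ pathLength l := by
  induction l with
  | nil => simp [pathLength]
  | cons a t ih =>
    cases t with
    | nil => simp [pathLength]
    | cons b m =>
      rw [pathLength_cons_cons]
      have := dist_nonneg (x := a) (y := b)
      linarith [ih]

lemma pathLength_append (xs : List X) (y : X) (ys : List X) :
    pathLength (xs ++ y :: ys) = pathLength (xs ++ [y]) + pathLength (y :: ys) := by
  induction xs with
  | nil => simp [pathLength_single]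
  | cons a t ih =>
    cases t with
    | nil =>
      simp only [List.nil_append, List.cons_append, pathLength_cons_cons]
      rw [pathLength_single]
      ring
    | cons b m =>
      simp only [List.cons_append, pathLength_cons_cons] at ih ⊢
      rw [ih]; ring

end PathLen

section Graph

variable {S : Type*}

lemma edgeGraph_mono {E F : Finset (Sym2 S)} (h : E ⊆ F) : edgeGraph E ≤ edgeGraph F :=
  fun _x _y hxy => ⟨hxy.1, h hxy.2⟩

lemma edgeSupport_mono {E F : Finset (Sym2 S)} (h : E ⊆ F) :
    edgeSupport E ⊆ edgeSupport F := by
  rintro x ⟨y, hxy, hmem⟩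
  exact ⟨y, hxy, h hmem⟩

lemma edgeGraph_adj {E : Finset (Sym2 S)} {x y : S} :
    (edgeGraph E).Adj x y ↔ x ≠ y ∧ s(x, y) ∈ E := Iff.rfl

lemma isAcyclic_anti {E F : Finset (Sym2 S)} (h : E ⊆ F)
    (hF : (edgeGraph F).IsAcyclic) : (edgeGraph E).IsAcyclic := by
  intro v c hc
  exact hF (c.mapLe (edgeGraph_mono h)) (hc.mapLe _)

/-- In a nonempty acyclic finite edge set with no diagonal edges there is a leaf:
a vertex with a unique neighbor. -/
lemma exists_leaf {M : Type*} [Fintype M] (E : Finset (Sym2 M)) (hne : E.Nonempty)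
    (hdiag : ∀ e ∈ E, ¬ e.IsDiag) (hac : (edgeGraph E).IsAcyclic) :
    ∃ a b : M, a ≠ b ∧ s(a, b) ∈ E ∧ ∀ c, s(a, c) ∈ E → c = b := by
  classical
  by_contra hno
  push_neg at hno
  -- hno : ∀ a b, a ≠ b → s(a,b) ∈ E → ∃ c, s(a,c) ∈ E ∧ c ≠ b
  have hext : ∀ {x y : M} (w : (edgeGraph E).Walk x y), w.IsPath → 1 ≤ w.length →
      ∃ (d : M) (w' : (edgeGraph E).Walk d y), w'.IsPath ∧ w'.length = w.length + 1 := by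
    intro x y w hp hlen
    cases w with
    | nil => simp at hlen
    | @cons _ c _ h1 q =>
      rw [SimpleGraph.Walk.cons_isPath_iff] at hp
      obtain ⟨hqp, hxq⟩ := hp
      obtain ⟨d, hd, hdc⟩ := hno x c h1.1 h1.2
      have hxd : x ≠ d := by
        intro h'
        exact hdiag _ hd (by rw [← h'] at hd ⊢; simp [Sym2.mk_isDiag_iff])
      have hadjxd : (edgeGraph E).Adj x d := ⟨hxd, hd⟩
      have hedge_notin : s(x, d) ∉ (SimpleGraph.Walk.cons h1 q).edges := by
        rw [SimpleGraph.Walk.edges_cons]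
        intro hmem
        rcases List.mem_cons.1 hmem with heq | hmem'
        · rcases Sym2.eq_iff.1 heq with ⟨_, rfl⟩ | ⟨rfl, _⟩
          · exact hdc rfl
          · exact h1.1 rfl
        · exact hxq (q.fst_mem_support_of_mem_edges hmem')
      have hdnot : d ∉ (SimpleGraph.Walk.cons h1 q).support := by
        intro hds
        set w := SimpleGraph.Walk.cons h1 q with hw
        have hwp : w.IsPath := (SimpleGraph.Walk.cons_isPath_iff _ _).2 ⟨hqp, hxq⟩
        have hp1 : (w.takeUntil d hds).IsPath := hwp.takeUntil hds
        have hcyc : (SimpleGraph.Walk.cons hadjxd (w.takeUntil d hds).reverse).IsCycle := by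
          rw [SimpleGraph.Walk.cons_isCycle_iff]
          refine ⟨hp1.reverse, ?_⟩
          rw [SimpleGraph.Walk.edges_reverse, List.mem_reverse]
          intro hmem
          exact hedge_notin (SimpleGraph.Walk.edges_takeUntil_subset w hds hmem)
        exact hac _ hcyc
      refine ⟨d, SimpleGraph.Walk.cons hadjxd.symm (SimpleGraph.Walk.cons h1 q),
        (SimpleGraph.Walk.cons_isPath_iff _ _).2
          ⟨(SimpleGraph.Walk.cons_isPath_iff _ _).2 ⟨hqp, hxq⟩, hdnot⟩, by
        simp [SimpleGraph.Walk.length_cons]⟩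
  have key : ∀ n : ℕ, ∃ (x y : M) (w : (edgeGraph E).Walk x y), w.IsPath ∧ w.length = n + 1 := by
    intro n
    induction n with
    | zero =>
      obtain ⟨e, he⟩ := hne
      induction e using Sym2.ind with
      | _ a b =>
        have hab : a ≠ b := by
          intro h; exact hdiag _ he (by rw [h]; simp [Sym2.mk_isDiag_iff])
        refine ⟨a, b, SimpleGraph.Walk.cons (edgeGraph_adj.2 ⟨hab, he⟩) SimpleGraph.Walk.nil, ?_, rfl⟩
        rw [SimpleGraph.Walk.cons_isPath_iff]
        refine ⟨SimpleGraph.Walk.IsPath.nil, ?_⟩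
        simp [hab]
    | succ n ih =>
      obtain ⟨x, y, w, hw, hlen⟩ := ih
      obtain ⟨d, w', hw', hlen'⟩ := hext w hw (by omega)
      exact ⟨d, y, w', hw', by omega⟩
  obtain ⟨x, y, w, hw, hlen⟩ := key (Fintype.card M)
  have := hw.length_lt
  omega

end Graph

/-- Existence of an Euler-type tour of a tree: a list visiting all support
vertices, with consecutive points distinct, of length at most twice the cost. -/
lemma exists_tour {M : Type*} [MetricSpace M] [Fintype M] :
    ∀ (n : ℕ) (E : Finset (Sym2 M)), E.card ≤ n →
    (∀ e ∈ E, ¬ e.IsDiag) →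
    (∀ x ∈ edgeSupport E, ∀ y ∈ edgeSupport E, (edgeGraph E).Reachable x y) →
    (edgeGraph E).IsAcyclic → E.Nonempty →
    ∃ p : List M, p ≠ [] ∧ List.Chain' (· ≠ ·) p ∧
      (∀ x ∈ edgeSupport E, x ∈ p) ∧ pathLength p ≤ 2 * edgeCost E := by
  classical
  intro n
  induction n with
  | zero =>
    intro E hcard _ _ _ hne
    exact absurd (Finset.card_eq_zero.1 (Nat.le_zero.1 hcard)) (Finset.nonempty_iff_ne_empty.1 hne)
  | succ n ih =>
    intro E hcard hd hconn hac hne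
    obtain ⟨a, b, hab, heE, hleaf⟩ := exists_leaf E hne hd hac
    set F : Finset (Sym2 M) := E.erase s(a, b) with hF
    have hFsub : F ⊆ E := Finset.erase_subset _ _
    have ha_not : a ∉ edgeSupport F := by
      rintro ⟨y, hay, hyF⟩
      have hyb : y = b := hleaf y (hFsub hyF)
      subst hyb
      exact Finset.notMem_erase _ _ hyF
    have hFd : ∀ e' ∈ F, ¬ e'.IsDiag := fun e' h => hd e' (hFsub h)
    have hFac : (edgeGraph F).IsAcyclic := isAcyclic_anti hFsub hac
    -- transfer edge condition: walks avoiding `a` live in `F`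
    have hedgesub : ∀ {x y : M} (w : (edgeGraph E).Walk x y), a ∉ w.support →
        ∀ e' ∈ w.edges, e' ∈ (edgeGraph F).edgeSet := by
      intro x y w hasup e' he'
      have hE' := w.edges_subset_edgeSet he'
      induction e' using Sym2.ind with
      | _ u v =>
        rw [SimpleGraph.mem_edgeSet] at hE' ⊢
        refine ⟨hE'.1, Finset.mem_erase.2 ⟨?_, hE'.2⟩⟩
        intro heq
        rcases Sym2.eq_iff.1 heq with ⟨rfl, rfl⟩ | ⟨rfl, rfl⟩
        · exact hasup (w.fst_mem_support_of_mem_edges he')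
        · exact hasup (w.snd_mem_support_of_mem_edges he')
    -- a path between vertices different from `a` avoids `a`
    have hnopath : ∀ {x y : M} (w : (edgeGraph E).Walk x y), w.IsPath → x ≠ a → y ≠ a →
        a ∉ w.support := by
      intro x y w hw hx hy hmem
      have hspec := w.take_spec hmem
      have hed : (w.takeUntil a hmem).edges ++ (w.dropUntil a hmem).edges = w.edges := by
        rw [← SimpleGraph.Walk.edges_append, hspec]
      have hnodup : ((w.takeUntil a hmem).edges ++ (w.dropUntil a hmem).edges).Nodup := by
        rw [hed]; exact hw.isTrail.edges_nodup
      have hdisj := List.disjoint_of_nodup_append hnodup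
      -- edge s(a,b) in dropUntil
      obtain ⟨v, hadj, q, hq⟩ :=
        SimpleGraph.Walk.exists_eq_cons_of_ne (Ne.symm hy) (w.dropUntil a hmem)
      have hvb : v = b := hleaf v hadj.2
      have hmem2 : s(a, b) ∈ (w.dropUntil a hmem).edges := by
        rw [hq, SimpleGraph.Walk.edges_cons, ← hvb]
        exact List.mem_cons_self
      -- edge s(a,b) in takeUntil
      obtain ⟨u, hadj', q', hq'⟩ :=
        SimpleGraph.Walk.exists_eq_cons_of_ne (Ne.symm hx) (w.takeUntil a hmem).reverse
      have hub : u = b := hleaf u hadj'.2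
      have hmem1 : s(a, b) ∈ (w.takeUntil a hmem).edges := by
        have : s(a, b) ∈ (w.takeUntil a hmem).reverse.edges := by
          rw [hq', SimpleGraph.Walk.edges_cons, ← hub]
          exact List.mem_cons_self
        rwa [SimpleGraph.Walk.edges_reverse, List.mem_reverse] at this
      exact hdisj hmem1 hmem2
    have hsuppF : ∀ x ∈ edgeSupport F, x ≠ a := fun x hx h => ha_not (h ▸ hx)
    have hconnF : ∀ x ∈ edgeSupport F, ∀ y ∈ edgeSupport F, (edgeGraph F).Reachable x y := by
      intro x hx y hy
      obtain ⟨w0⟩ := hconn x (edgeSupport_mono hFsub hx) y (edgeSupport_mono hFsub hy)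
      let w := w0.toPath
      have hasup : a ∉ (w : (edgeGraph E).Walk x y).support :=
        hnopath _ w.2 (hsuppF x hx) (hsuppF y hy)
      exact ⟨(w : (edgeGraph E).Walk x y).transfer _ (hedgesub _ hasup)⟩
    have hbE : b ∈ edgeSupport E := ⟨a, hab.symm, by rw [Sym2.eq_swap]; exact heE⟩
    have hsuppEF : ∀ x ∈ edgeSupport E, x ∈ edgeSupport F ∨ x = a ∨ x = b := by
      rintro x ⟨y, hxy, hmem⟩
      by_cases hcase : s(x, y) = s(a, b)
      · rcases Sym2.eq_iff.1 hcase with ⟨rfl, rfl⟩ | ⟨rfl, rfl⟩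
        · exact Or.inr (Or.inl rfl)
        · exact Or.inr (Or.inr rfl)
      · exact Or.inl ⟨y, hxy, Finset.mem_erase.2 ⟨hcase, hmem⟩⟩
    have hcost : edgeCost F + dist a b = edgeCost E := by
      have := Finset.sum_erase_add E (Sym2.lift ⟨dist, fun a b => dist_comm a b⟩) heE
      simpa [edgeCost, Sym2.lift_mk] using this
    rcases F.eq_empty_or_nonempty with hFe | hFne
    · -- E = {s(a,b)}
      have hE1 : E = {s(a, b)} := by
        rcases (Finset.erase_eq_empty_iff E s(a, b)).1 hFe with h | h
        · exact absurd h (Finset.nonempty_iff_ne_empty.1 hne)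
        · exact h
      refine ⟨[a, b], by simp, by simp [List.Chain', List.isChain_pair, hab], ?_, ?_⟩
      · rintro x ⟨y, hxy, hmem⟩
        rw [hE1, Finset.mem_singleton] at hmem
        rcases Sym2.eq_iff.1 hmem with ⟨rfl, rfl⟩ | ⟨rfl, rfl⟩ <;> simp
      · rw [hE1]
        have : edgeCost ({s(a, b)} : Finset (Sym2 M)) = dist a b := by
          simp [edgeCost, Sym2.lift_mk]
        rw [this, pathLength_cons_cons, pathLength_single]
        linarith [dist_nonneg (x := a) (y := b)]
    · -- b is in the support of F
      have hbF : b ∈ edgeSupport F := by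
        obtain ⟨e', he'F⟩ := hFne
        induction e' using Sym2.ind with
        | _ u v =>
          have huv : u ≠ v := by
            intro h; exact hFd _ he'F (by rw [h]; simp [Sym2.mk_isDiag_iff])
          have huF : u ∈ edgeSupport F := ⟨v, huv, he'F⟩
          have hua : u ≠ a := hsuppF u huF
          by_cases hub : u = b
          · exact hub ▸ huF
          · obtain ⟨w0⟩ := hconn u (edgeSupport_mono hFsub huF) b hbE
            let w := w0.toPath
            have hasup : a ∉ (w : (edgeGraph E).Walk u b).support :=
              hnopath _ w.2 hua hab.symm
            obtain ⟨c, hadj, q, hq⟩ := SimpleGraph.Walk.exists_eq_cons_of_ne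
              (fun h => hub h.symm) (w : (edgeGraph E).Walk u b).reverse
            have hbc : b ≠ c := hadj.1
            have hca : c ≠ a := by
              intro h
              subst h
              apply hasup
              have : c ∈ (w : (edgeGraph E).Walk u b).reverse.support := by
                rw [hq]; simp
              rwa [SimpleGraph.Walk.support_reverse, List.mem_reverse] at this
            have hbcE : s(b, c) ∈ E := hadj.2
            have : s(b, c) ∈ F := by
              refine Finset.mem_erase.2 ⟨?_, hbcE⟩
              intro heq
              rcases Sym2.eq_iff.1 heq with ⟨h1, _⟩ | ⟨_, h2⟩
              · exact hab h1.symm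
              · exact hca h2
            exact ⟨c, hbc, this⟩
      have hcardF : F.card ≤ n := by
        have h1 : F.card = E.card - 1 := Finset.card_erase_of_mem heE
        have h2 : 1 ≤ E.card := Finset.card_pos.2 hne
        omega
      obtain ⟨q, hqne, hqchain, hqsupp, hqlen⟩ := ih F hcardF hFd hconnF hFac hFne
      obtain ⟨q1, q2, rfl⟩ := List.append_of_mem (hqsupp b hbF)
      refine ⟨q1 ++ b :: a :: b :: q2, by simp, ?_, ?_, ?_⟩
      · rw [List.Chain', List.isChain_append] at hqchain ⊢
        obtain ⟨h1, h2, h3⟩ := hqchain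
        refine ⟨h1, ?_, ?_⟩
        · rw [List.isChain_cons_cons, List.isChain_cons_cons]
          exact ⟨hab.symm, hab, h2⟩
        · intro x hx y hy
          apply h3 x hx
          simpa using hy
      · intro x hx
        rcases hsuppEF x hx with hxF | rfl | rfl
        · have := hqsupp x hxF
          simp only [List.mem_append, List.mem_cons] at this ⊢
          tauto
        · simp
        · simp
      · have e1 : pathLength (q1 ++ b :: a :: b :: q2) =
            pathLength (q1 ++ [b]) + pathLength (b :: a :: b :: q2) :=
          pathLength_append q1 b (a :: b :: q2)
        have e2 : pathLength (q1 ++ b :: q2) =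
            pathLength (q1 ++ [b]) + pathLength (b :: q2) :=
          pathLength_append q1 b q2
        rw [e1, pathLength_cons_cons, pathLength_cons_cons]
        rw [e2] at hqlen
        have hd2 : dist b a = dist a b := dist_comm b a
        linarith [hqlen, hcost]

/-! ### edges of a path in `N` -/

def pathEdges {X : Type*} (p : List X) : List (Sym2 X) :=
  List.zipWith (fun a b => s(a, b)) p p.tail

lemma pathEdges_nil {X : Type*} : pathEdges ([] : List X) = [] := rfl

lemma pathEdges_single {X : Type*} (a : X) : pathEdges [a] = [] := rfl

lemma pathEdges_cons_cons {X : Type*} (a b : X) (l : List X) :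
    pathEdges (a :: b :: l) = s(a, b) :: pathEdges (b :: l) := rfl

lemma mem_of_mem_pathEdges {X : Type*} :
    ∀ {p : List X} {x y : X}, s(x, y) ∈ pathEdges p → x ∈ p ∧ y ∈ p := by
  intro p
  induction p with
  | nil => intro x y h; simp [pathEdges_nil] at h
  | cons a t ih =>
    cases t with
    | nil => intro x y h; simp [pathEdges_single] at h
    | cons b l =>
      intro x y h
      rw [pathEdges_cons_cons] at h
      rcases List.mem_cons.1 h with heq | hmem
      · rcases Sym2.eq_iff.1 heq with ⟨rfl, rfl⟩ | ⟨rfl, rfl⟩ <;> simp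
      · obtain ⟨h1, h2⟩ := ih hmem
        exact ⟨List.mem_cons_of_mem _ h1, List.mem_cons_of_mem _ h2⟩

lemma pathEdges_not_diag {X : Type*} :
    ∀ {p : List X}, List.Chain' (· ≠ ·) p → ∀ e ∈ pathEdges p, ¬ e.IsDiag := by
  intro p
  induction p with
  | nil => intro _ e he; simp [pathEdges_nil] at he
  | cons a t ih =>
    cases t with
    | nil => intro _ e he; simp [pathEdges_single] at he
    | cons b l =>
      intro hc e he
      rw [List.Chain', List.isChain_cons_cons] at hc
      rw [pathEdges_cons_cons] at he
      rcases List.mem_cons.1 he with rfl | hmem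
      · simpa [Sym2.mk_isDiag_iff] using hc.1
      · exact ih hc.2 e hmem

lemma pathEdges_sublist_subset {X : Type*} [DecidableEq (Sym2 X)] (a b : X) (l : List X) :
    (pathEdges (b :: l)).toFinset ⊆ (pathEdges (a :: b :: l)).toFinset := by
  intro e he
  rw [List.mem_toFinset] at he ⊢
  rw [pathEdges_cons_cons]
  exact List.mem_cons_of_mem _ he

lemma pathEdges_reach_head {X : Type*} [DecidableEq (Sym2 X)] :
    ∀ {p : List X} {a : X}, List.Chain' (· ≠ ·) (a :: p) →
      ∀ x ∈ a :: p, (edgeGraph (pathEdges (a :: p)).toFinset).Reachable a x := by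
  intro p
  induction p with
  | nil =>
    intro a _ x hx
    rw [List.mem_singleton] at hx
    subst hx
    exact SimpleGraph.Reachable.refl _
  | cons b l ih =>
    intro a hc x hx
    rw [List.Chain', List.isChain_cons_cons] at hc
    have hadj : (edgeGraph (pathEdges (a :: b :: l)).toFinset).Adj a b := by
      refine ⟨hc.1, ?_⟩
      rw [List.mem_toFinset, pathEdges_cons_cons]
      exact List.mem_cons_self
    rcases List.mem_cons.1 hx with rfl | hx'
    · exact SimpleGraph.Reachable.refl _
    · have hr : (edgeGraph (pathEdges (b :: l)).toFinset).Reachable b x := ih hc.2 x hx'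
      have hmono : edgeGraph (pathEdges (b :: l)).toFinset ≤
          edgeGraph (pathEdges (a :: b :: l)).toFinset :=
        edgeGraph_mono (pathEdges_sublist_subset a b l)
      exact hadj.reachable.trans (hr.mono hmono)

lemma pathEdges_reach {X : Type*} [DecidableEq (Sym2 X)] {p : List X}
    (hc : List.Chain' (· ≠ ·) p) :
    ∀ x ∈ p, ∀ y ∈ p, (edgeGraph (pathEdges p).toFinset).Reachable x y := by
  cases p with
  | nil => intro x hx; simp at hx
  | cons a t =>
    intro x hx y hy
    exact (pathEdges_reach_head hc x hx).symm.trans (pathEdges_reach_head hc y hy)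

lemma mem_edgeSupport_pathEdges {X : Type*} [DecidableEq (Sym2 X)] :
    ∀ {p : List X}, List.Chain' (· ≠ ·) p → 2 ≤ p.length →
      ∀ x ∈ p, x ∈ edgeSupport (pathEdges p).toFinset := by
  intro p
  induction p with
  | nil => intro _ h; simp at h
  | cons a t ih =>
    cases t with
    | nil => intro _ h; simp at h
    | cons b l =>
      intro hc _ x hx
      rw [List.Chain', List.isChain_cons_cons] at hc
      have habm : s(a, b) ∈ (pathEdges (a :: b :: l)).toFinset := by
        rw [List.mem_toFinset, pathEdges_cons_cons]
        exact List.mem_cons_self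
      rcases List.mem_cons.1 hx with rfl | hx'
      · exact ⟨b, hc.1, habm⟩
      · cases l with
        | nil =>
          rw [List.mem_singleton] at hx'
          subst hx'
          exact ⟨a, hc.1.symm, by rwa [Sym2.eq_swap]⟩
        | cons c m =>
          have := ih hc.2 (by simp) x hx'
          exact edgeSupport_mono (pathEdges_sublist_subset a b (c :: m)) this

lemma edgeCost_toFinset_le {X : Type*} [MetricSpace X] [DecidableEq (Sym2 X)] :
    ∀ l : List (Sym2 X),
      edgeCost l.toFinset ≤ (l.map (Sym2.lift ⟨dist, fun a b => dist_comm a b⟩)).sum := by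
  intro l
  induction l with
  | nil => simp [edgeCost]
  | cons e t ih =>
    have hnn : 0 ≤ Sym2.lift ⟨dist, fun a b => dist_comm a b⟩ e := by
      induction e using Sym2.ind with
      | _ a b => simpa [Sym2.lift_mk] using dist_nonneg (x := a) (y := b)
    rw [List.toFinset_cons, List.map_cons, List.sum_cons]
    by_cases hmem : e ∈ t.toFinset
    · rw [Finset.insert_eq_self.2 hmem]
      linarith
    · rw [edgeCost, Finset.sum_insert hmem]
      rw [edgeCost] at ih
      linarith

lemma pathEdges_map_sum {X : Type*} [MetricSpace X] :
    ∀ p : List X,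
      ((pathEdges p).map (Sym2.lift ⟨dist, fun a b => dist_comm a b⟩)).sum = pathLength p := by
  intro p
  induction p with
  | nil => simp [pathEdges_nil, pathLength_nil]
  | cons a t ih =>
    cases t with
    | nil => simp [pathEdges_single, pathLength_single]
    | cons b l =>
      rw [pathEdges_cons_cons, List.map_cons, List.sum_cons, ih, pathLength_cons_cons,
        Sym2.lift_mk]



/-- Lifting a Steiner tree along a surjective non-contractive multi-embedding `f : N → M`
of path distortion at most `α`: every Steiner subgraph `E` in the finite metric space `M`
for the groups `g_1,…,g_k` whose graph is a tree (connected and acyclic on its support)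
admits a Steiner subgraph `E'` in `N` for the groups `f⁻¹(g_1),…,f⁻¹(g_k)` with
`cost(E') ≤ 2α·cost(E)`. -/
theorem steiner_lift
    {N M : Type*} [MetricSpace N] [MetricSpace M] [Fintype M]
    (f : N → M) (α : ℝ)
    (hsurj : Function.Surjective f)
    (hnc : NonContractive f)
    (hpd : PathDistortionLE f α)
    (k : ℕ) (g : Fin k → Set M)
    (E : Finset (Sym2 M))
    (hE : IsSteinerSubgraph E g)
    (htree : (edgeGraph E).IsAcyclic) :
    ∃ E' : Finset (Sym2 N),
      IsSteinerSubgraph E' (fun j => f ⁻¹' (g j)) ∧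
      edgeCost E' ≤ 2 * α * edgeCost E := by
  classical
  obtain ⟨hdiag, hconn, hgroups⟩ := hE
  rcases E.eq_empty_or_nonempty with rfl | hne
  · refine ⟨∅, ⟨by simp, ?_, ?_⟩, by simp [edgeCost]⟩
    · rintro x ⟨y, _, h⟩
      simp at h
    · intro j
      obtain ⟨x, hx, _⟩ := hgroups j
      obtain ⟨y, _, h⟩ := hx
      simp at h
  · -- nonempty case
    obtain ⟨p, hpne, hpchain, hpsupp, hplen⟩ :=
      exists_tour E.card E le_rfl hdiag hconn htree hne
    obtain ⟨p', hmap, hp'len⟩ := hpd p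
    -- α is nonnegative
    obtain ⟨e0, he0⟩ := hne
    have hα : 0 ≤ α := by
      induction e0 using Sym2.ind with
      | _ a b =>
        have hab : a ≠ b := by
          intro h; exact hdiag _ he0 (by rw [h]; simp [Sym2.mk_isDiag_iff])
        obtain ⟨q', hq'map, hq'len⟩ := hpd [a, b]
        have hlen2 : q'.length = 2 := by
          have := congrArg List.length hq'map
          simpa using this
        match q', hlen2 with
        | [u, v], _ =>
          simp only [List.map_cons, List.map_nil, List.cons.injEq, and_true] at hq'map
          obtain ⟨hu, hv⟩ := hq'map
          have h1 : dist a b ≤ dist u v := by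
            have := hnc u v
            rw [hu, hv] at this
            exact this
          have h2 : pathLength [u, v] = dist u v := by
            rw [pathLength_cons_cons, pathLength_single]; ring
          have h3 : pathLength [a, b] = dist a b := by
            rw [pathLength_cons_cons, pathLength_single]; ring
          rw [h2, h3] at hq'len
          have hpos : 0 < dist a b := dist_pos.2 hab
          nlinarith
    have hchain' : List.Chain' (· ≠ ·) p' := by
      have h1 : List.Chain' (· ≠ ·) (p'.map f) := hmap ▸ hpchain
      rw [List.Chain', List.isChain_map] at h1
      exact h1.imp (fun a b h heq => h (congrArg f heq))
    have hlen_eq : p'.length = p.length := by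
      have := congrArg List.length hmap
      simpa using this
    have hplen2 : 2 ≤ p.length := by
      induction e0 using Sym2.ind with
      | _ a b =>
        have hab : a ≠ b := by
          intro h; exact hdiag _ he0 (by rw [h]; simp [Sym2.mk_isDiag_iff])
        have haM : a ∈ p := hpsupp a ⟨b, hab, he0⟩
        have hbM : b ∈ p := hpsupp b ⟨a, hab.symm, by rwa [Sym2.eq_swap]⟩
        match p, haM, hbM with
        | [], h, _ => simp at h
        | [z], h1, h2 =>
          rw [List.mem_singleton] at h1 h2
          exact absurd (h1.trans h2.symm) hab
        | _ :: _ :: _, _, _ => simp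
    refine ⟨(pathEdges p').toFinset, ⟨?_, ?_, ?_⟩, ?_⟩
    · intro e he
      exact pathEdges_not_diag hchain' e (List.mem_toFinset.1 he)
    · rintro x ⟨zx, _, hx⟩ y ⟨zy, _, hy⟩
      have hxp : x ∈ p' := (mem_of_mem_pathEdges (List.mem_toFinset.1 hx)).1
      have hyp : y ∈ p' := (mem_of_mem_pathEdges (List.mem_toFinset.1 hy)).1
      exact pathEdges_reach hchain' x hxp y hyp
    · intro j
      obtain ⟨x, hxsupp, hxg⟩ := hgroups j
      have hxp : x ∈ p := hpsupp x hxsupp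
      rw [← hmap] at hxp
      obtain ⟨u, hu, hfu⟩ := List.mem_map.1 hxp
      refine ⟨u, mem_edgeSupport_pathEdges hchain' (by omega) u hu, ?_⟩
      show f u ∈ g j
      rw [hfu]
      exact hxg
    · calc edgeCost (pathEdges p').toFinset
          ≤ ((pathEdges p').map (Sym2.lift ⟨dist, fun a b => dist_comm a b⟩)).sum :=
            edgeCost_toFinset_le _
        _ = pathLength p' := pathEdges_map_sum p'
        _ ≤ α * pathLength p := hp'len
        _ ≤ α * (2 * edgeCost E) := mul_le_mul_of_nonneg_left hplen hα
        _ = 2 * α * edgeCost E := by ring
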